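/- Assume |w_b| + |w_f| < 1, and let f be a solution of the Collatz functional equation for (k, w_b, w_f) with coefficients (aₙ). If aₙ ≠ 0 for a positive integer n, then n lies in the Collatz orbit of k, i.e. Col^[i](k) = n for some i ≥ 0. -/

import Mathlib

/-- The open unit disc in `ℂ`. -/
def openUnitDisc : Set ℂ := {z : ℂ | ‖z‖ < 1}

/-- `f` is a solution of the Collatz functional equation for `(k, wb, wf)`:
it is analytic and bounded on the open unit disc and satisfies the functional equation
`2 f(x²) = wb (f(x) + f(−x)) + wf x² (f(x⁶) − f(−x⁶)) + 2 x^(2k)` there. -/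
def IsSolution (k : ℕ) (wb wf : ℝ) (f : ℂ → ℂ) : Prop :=
  AnalyticOnNhd ℂ f openUnitDisc ∧
  (∃ C : ℝ, ∀ z ∈ openUnitDisc, ‖f z‖ ≤ C) ∧
  ∀ x : ℂ, ‖x‖ < 1 →
    2 * f (x ^ 2) =
      (wb : ℂ) * (f x + f (-x)) + (wf : ℂ) * x ^ 2 * (f (x ^ 6) - f (-x ^ 6)) +
        2 * x ^ (2 * k)

/-- `a` is the sequence of Taylor coefficients of `f` at `0`:
`f x = Σ aₙ xⁿ` on the open unit disc. -/
def HasCoeffs (f : ℂ → ℂ) (a : ℕ → ℂ) : Prop :=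
  ∀ x : ℂ, ‖x‖ < 1 → HasSum (fun n => a n * x ^ n) (f x)

/-- The Collatz map: `3n+1` on odd numbers, `n/2` on even numbers. -/
def Col (n : ℕ) : ℕ := if n % 2 = 1 then 3 * n + 1 else n / 2

open Filter Topology
open scoped NNReal

private lemma hasFPSOB {g : ℂ → ℂ} {b : ℕ → ℂ}
    (hb : ∀ x : ℂ, ‖x‖ < 1 → HasSum (fun n => b n * x ^ n) (g x)) :
    HasFPowerSeriesOnBall g (FormalMultilinearSeries.ofScalars ℂ b) 0 1 := by
  constructor
  · apply ENNReal.le_of_forall_nnreal_lt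
    intro r hr
    have hr1 : (r : ℝ) < 1 := by exact_mod_cast hr
    have hr0 : (0:ℝ) ≤ r := r.coe_nonneg
    set s : ℝ := ((r : ℝ) + 1) / 2 with hs
    have hs0 : 0 ≤ s := by positivity
    have hrs : (r : ℝ) ≤ s := by simp only [hs]; linarith
    have hs1 : s < 1 := by simp only [hs]; linarith
    have hx : ‖(s : ℂ)‖ < 1 := by
      rwa [Complex.norm_real, Real.norm_eq_abs, abs_of_nonneg hs0]
    have h1 := (hb _ hx).summable.tendsto_atTop_zero.norm
    rw [norm_zero] at h1
    obtain ⟨C, hC⟩ := h1.bddAbove_range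
    apply FormalMultilinearSeries.le_radius_of_bound _ C
    intro n
    have h2 : ‖b n * (s:ℂ)^n‖ ≤ C := hC ⟨n, rfl⟩
    calc ‖FormalMultilinearSeries.ofScalars ℂ b n‖ * (r:ℝ)^n
        = ‖b n‖ * (r:ℝ)^n := by rw [FormalMultilinearSeries.ofScalars_norm]
      _ ≤ ‖b n‖ * s^n := by gcongr
      _ = ‖b n * (s:ℂ)^n‖ := by
          simp [norm_mul, norm_pow, Complex.norm_real, abs_of_nonneg hs0]
      _ ≤ C := h2
  · exact zero_lt_one
  · intro y hy
    have hy1 : ‖y‖ < 1 := by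
      have := hy
      simp only [EMetric.mem_ball, edist_zero_right, enorm_eq_nnnorm] at this
      have h2 : ‖y‖₊ < 1 := by exact_mod_cast this
      rw [← coe_nnnorm]
      exact_mod_cast h2
    have hsum := hb y hy1
    have heq : (fun n => (FormalMultilinearSeries.ofScalars ℂ b n) fun _ => y)
        = fun n => b n * y ^ n := by
      funext n
      rw [FormalMultilinearSeries.ofScalars_apply_eq, smul_eq_mul]
    rw [zero_add, heq]
    exact hsum

lemma coeffs_unique {g : ℂ → ℂ} {b c : ℕ → ℂ}
    (hb : ∀ x : ℂ, ‖x‖ < 1 → HasSum (fun n => b n * x ^ n) (g x))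
    (hc : ∀ x : ℂ, ‖x‖ < 1 → HasSum (fun n => c n * x ^ n) (g x)) : b = c := by
  have h := ((hasFPSOB hb).hasFPowerSeriesAt).eq_formalMultilinearSeries
    ((hasFPSOB hc).hasFPowerSeriesAt)
  exact FormalMultilinearSeries.ofScalars_series_injective ℂ ℂ h

open Real in
private lemma coeff_bound {f : ℂ → ℂ} {a : ℕ → ℂ} {C : ℝ}
    (hd : AnalyticOnNhd ℂ f openUnitDisc)
    (hC : ∀ z ∈ openUnitDisc, ‖f z‖ ≤ C)
    (ha : HasCoeffs f a) (n : ℕ) : ‖a n‖ ≤ C := by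
  have hC0 : 0 ≤ C := le_trans (norm_nonneg _) (hC 0 (by simp [openUnitDisc]))
  have key : ∀ r : ℝ, 0 < r → r < 1 → ‖a n‖ * r ^ n ≤ C := by
    intro r hr0 hr1
    lift r to ℝ≥0 using hr0.le with r' hr'
    have hr0' : 0 < r' := by exact_mod_cast hr0
    have hsub : Metric.closedBall (0:ℂ) r' ⊆ openUnitDisc := by
      intro z hz
      simp only [Metric.mem_closedBall, dist_zero_right] at hz
      have : ‖z‖ < 1 := lt_of_le_of_lt hz hr1
      simpa [openUnitDisc] using this
    have hdiff : DifferentiableOn ℂ f (Metric.closedBall (0:ℂ) r') := fun z hz =>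
      ((hd z (hsub hz)).differentiableAt).differentiableWithinAt
    have h1 := hdiff.hasFPowerSeriesOnBall hr0'
    have h2 := hasFPSOB (fun x hx => ha x hx)
    have heq := h2.hasFPowerSeriesAt.eq_formalMultilinearSeries h1.hasFPowerSeriesAt
    have hnorm : ‖a n‖ = ‖cauchyPowerSeries f 0 (r' : ℝ) n‖ := by
      rw [
        ← FormalMultilinearSeries.ofScalars_norm (𝕜 := ℂ) (E := ℂ) a n, heq]
    have hb := norm_cauchyPowerSeries_le f 0 (r' : ℝ) n
    -- bound the integral
    have hcont : Continuous fun θ : ℝ => ‖f (circleMap 0 (r' : ℝ) θ)‖ := by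
      apply Continuous.norm
      rw [continuous_iff_continuousAt]
      intro θ
      have hmem : circleMap 0 (r' : ℝ) θ ∈ openUnitDisc := by
        simp only [openUnitDisc, Set.mem_setOf_eq, norm_circleMap_zero]
        rw [abs_of_nonneg r'.coe_nonneg]
        exact hr1
      exact ((hd _ hmem).continuousAt).comp (continuous_circleMap 0 (r':ℝ)).continuousAt
    have hintle : ∫ θ : ℝ in (0)..2 * π, ‖f (circleMap 0 (r':ℝ) θ)‖ ≤ 2 * π * C := by
      have h := intervalIntegral.integral_mono_on (f := fun θ : ℝ => ‖f (circleMap 0 (r':ℝ) θ)‖)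
        (g := fun _ : ℝ => C) (μ := MeasureTheory.volume) (by positivity : (0:ℝ) ≤ 2 * π)
        (hcont.intervalIntegrable _ _) (intervalIntegrable_const)
        (fun θ _ => by
          have hmem : circleMap 0 (r' : ℝ) θ ∈ openUnitDisc := by
            simp only [openUnitDisc, Set.mem_setOf_eq, norm_circleMap_zero]
            rw [abs_of_nonneg r'.coe_nonneg]; exact hr1
          simpa using hC _ hmem)
      simpa [mul_comm] using h
    have hfinal : ‖cauchyPowerSeries f 0 (r':ℝ) n‖ ≤ C * ((r':ℝ)⁻¹) ^ n := by
      refine hb.trans ?_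
      rw [abs_of_nonneg r'.coe_nonneg]
      gcongr
      calc (2 * π)⁻¹ * ∫ θ : ℝ in (0)..2 * π, ‖f (circleMap 0 (r':ℝ) θ)‖
          ≤ (2 * π)⁻¹ * (2 * π * C) := by gcongr
        _ = C := by field_simp
    rw [hnorm]
    calc ‖cauchyPowerSeries f 0 (r':ℝ) n‖ * (r':ℝ) ^ n
        ≤ C * ((r':ℝ)⁻¹) ^ n * (r':ℝ) ^ n := by gcongr
      _ = C := by
          rw [mul_assoc, ← mul_pow, inv_mul_cancel₀ (ne_of_gt hr0), one_pow, mul_one]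
  -- take the limit r → 1⁻
  have hlim : Tendsto (fun r : ℝ => ‖a n‖ * r ^ n)
      (nhdsWithin 1 (Set.Ioo (0:ℝ) 1)) (𝓝 (‖a n‖)) := by
    have hcont : Continuous fun r : ℝ => ‖a n‖ * r ^ n := by continuity
    have := (hcont.tendsto 1).mono_left (nhdsWithin_le_nhds (s := Set.Ioo (0:ℝ) 1))
    simpa using this
  have hne : (nhdsWithin (1:ℝ) (Set.Ioo (0:ℝ) 1)).NeBot :=
    right_nhdsWithin_Ioo_neBot zero_lt_one
  exact le_of_tendsto hlim
    (eventually_nhdsWithin_of_forall (fun r hr => key r hr.1 hr.2))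

private lemma recursion {k : ℕ} {wb wf : ℝ} {f : ℂ → ℂ} {a : ℕ → ℂ}
    (hf : IsSolution k wb wf f) (ha : HasCoeffs f a) (n : ℕ) :
    a n = (wb : ℂ) * a (2 * n) + (if n % 6 = 4 then (wf : ℂ) * a ((n - 1) / 3) else 0)
        + (if n = k then 1 else 0) := by
  obtain ⟨hana, hbd, hfe⟩ := hf
  set b : ℕ → ℂ := fun m => (if Even m then 2 * (wb : ℂ) * a m else 0)
      + (if m % 12 = 8 then 2 * (wf : ℂ) * a ((m - 2) / 6) else 0)
      + (if m = 2 * k then 2 else 0) with hbdef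
  set c : ℕ → ℂ := fun m => if Even m then 2 * a (m / 2) else 0 with hcdef
  have hcsum : ∀ x : ℂ, ‖x‖ < 1 →
      HasSum (fun m => c m * x ^ m) (2 * f (x ^ 2)) := by
    intro x hx
    have hx2 : ‖x ^ 2‖ < 1 := by
      rw [norm_pow]
      exact pow_lt_one₀ (norm_nonneg x) hx two_ne_zero
    have h := (ha (x ^ 2) hx2).mul_left 2
    have hinj : Function.Injective (fun i : ℕ => 2 * i) := fun i j h => by
      simp only [] at h; omega
    apply (hinj.hasSum_iff ?_).mp
    · have hfun : ((fun m => c m * x ^ m) ∘ fun i : ℕ => 2 * i)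
          = fun i => 2 * (a i * (x ^ 2) ^ i) := by
        funext i
        simp only [Function.comp_apply, hcdef]
        rw [if_pos ⟨i, by ring⟩]
        rw [Nat.mul_div_cancel_left i two_pos, ← pow_mul]
        ring
      rw [hfun]
      exact h
    · intro m hm
      have : ¬ Even m := by
        rintro ⟨i, hi⟩
        exact hm ⟨i, by show 2 * i = m; omega⟩
      rw [hcdef]
      simp [this]
  have hbsum : ∀ x : ℂ, ‖x‖ < 1 →
      HasSum (fun m => b m * x ^ m) (2 * f (x ^ 2)) := by
    intro x hx
    have hxneg : ‖-x‖ < 1 := by rwa [norm_neg]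
    have hx6 : ‖x ^ 6‖ < 1 := by
      rw [norm_pow]
      exact pow_lt_one₀ (norm_nonneg x) hx (by norm_num)
    have hx6' : ‖-x ^ 6‖ < 1 := by rwa [norm_neg]
    -- piece 1
    have h1 : HasSum (fun m => (if Even m then 2 * (wb : ℂ) * a m else 0) * x ^ m)
        ((wb : ℂ) * (f x + f (-x))) := by
      have h := ((ha x hx).add (ha (-x) hxneg)).mul_left (wb : ℂ)
      have hfun : (fun m => (wb : ℂ) * (a m * x ^ m + a m * (-x) ^ m))
          = fun m => (if Even m then 2 * (wb : ℂ) * a m else 0) * x ^ m := by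
        funext m
        rcases Nat.even_or_odd m with he | ho
        · rw [if_pos he, he.neg_pow]
          ring
        · rw [if_neg (Nat.not_even_iff_odd.mpr ho), ho.neg_pow]
          ring
      rw [← hfun]
      exact h
    -- piece 2
    have h2 : HasSum (fun m => (if m % 12 = 8 then 2 * (wf : ℂ) * a ((m - 2) / 6) else 0) * x ^ m)
        ((wf : ℂ) * x ^ 2 * (f (x ^ 6) - f (-x ^ 6))) := by
      have h := ((ha (x ^ 6) hx6).sub (ha (-x ^ 6) hx6')).mul_left ((wf : ℂ) * x ^ 2)
      have hinj : Function.Injective (fun i : ℕ => 6 * i + 2) := fun i j hij => by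
        simp only [] at hij; omega
      apply (hinj.hasSum_iff ?_).mp
      · have hfun : ((fun m => (if m % 12 = 8 then 2 * (wf : ℂ) * a ((m - 2) / 6) else 0) * x ^ m)
            ∘ fun i : ℕ => 6 * i + 2)
            = fun i => (wf : ℂ) * x ^ 2 * (a i * (x ^ 6) ^ i - a i * (-x ^ 6) ^ i) := by
          funext i
          simp only [Function.comp_apply]
          have hdiv : (6 * i + 2 - 2) / 6 = i := by omega
          rcases Nat.even_or_odd i with he | ho
          · have hcond : ¬ (6 * i + 2) % 12 = 8 := by
              obtain ⟨j, hj⟩ := he; omega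
            rw [if_neg hcond, neg_pow, he.neg_one_pow]
            ring
          · have hcond : (6 * i + 2) % 12 = 8 := by
              obtain ⟨j, hj⟩ := ho; omega
            rw [if_pos hcond, hdiv, neg_pow, ho.neg_one_pow]
            ring
        rw [hfun]
        exact h
      · intro m hm
        by_cases h8 : m % 12 = 8
        · exact absurd (⟨(m - 2) / 6, by show 6 * ((m - 2) / 6) + 2 = m; omega⟩ :
            m ∈ Set.range fun i : ℕ => 6 * i + 2) hm
        · rw [if_neg h8, zero_mul]
    -- piece 3
    have h3 : HasSum (fun m => (if m = 2 * k then (2:ℂ) else 0) * x ^ m) (2 * x ^ (2 * k)) := by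
      have := hasSum_single (f := fun m => (if m = 2 * k then (2:ℂ) else 0) * x ^ m) (2 * k)
        (fun m hm => by simp [hm])
      simpa using this
    have hcomb := (h1.add h2).add h3
    rw [← hfe x hx] at hcomb
    have hfun : (fun m => ((if Even m then 2 * (wb : ℂ) * a m else 0) * x ^ m
        + (if m % 12 = 8 then 2 * (wf : ℂ) * a ((m - 2) / 6) else 0) * x ^ m)
        + (if m = 2 * k then (2:ℂ) else 0) * x ^ m)
        = fun m => b m * x ^ m := by
      funext m
      rw [hbdef]
      ring
    rw [hfun] at hcomb
    exact hcomb
  have hmain : c = b := coeffs_unique hcsum hbsum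
  have h2n := congrFun hmain (2 * n)
  rw [hcdef, hbdef] at h2n
  beta_reduce at h2n
  have hev : Even (2 * n) := ⟨n, by ring⟩
  have e1 : (2 * n) % 12 = 8 ↔ n % 6 = 4 := by omega
  have e2 : (2 * n - 2) / 6 = (n - 1) / 3 := by omega
  have e3 : 2 * n = 2 * k ↔ n = k := by omega
  rw [if_pos hev, if_pos hev, Nat.mul_div_cancel_left n two_pos, e2] at h2n
  simp only [e1, e3] at h2n
  by_cases hk : n = k
  · subst hk
    by_cases h4 : n % 6 = 4 <;>
      simp only [h4, eq_self_iff_true, if_true, if_false, reduceIte] at h2n ⊢ <;>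
      linear_combination h2n / 2
  · by_cases h4 : n % 6 = 4 <;>
      simp only [h4, hk, eq_self_iff_true, if_true, if_false, reduceIte] at h2n ⊢ <;>
      linear_combination h2n / 2

theorem stmt_11 (k : ℕ) (wb wf : ℝ) (f : ℂ → ℂ) (a : ℕ → ℂ) (hk : 0 < k)
    (hw : |wb| + |wf| < 1)
    (hf : IsSolution k wb wf f) (ha : HasCoeffs f a)
    (n : ℕ) (hn : 0 < n) (hne : a n ≠ 0) :
    ∃ i : ℕ, Col^[i] k = n := by
  by_contra hcon
  push_neg at hcon
  obtain ⟨hana, ⟨C, hC⟩, -⟩ := id hf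
  have hw0 : (0:ℝ) ≤ |wb| + |wf| := by positivity
  have hbound := coeff_bound hana hC ha
  have key : ∀ j : ℕ, ∀ m : ℕ, 0 < m → (∀ i, Col^[i] k ≠ m) →
      ‖a m‖ ≤ (|wb| + |wf|) ^ j * C := by
    intro j
    induction j with
    | zero => intro m _ _; simpa using hbound m
    | succ j ih =>
      intro m hm hbad
      have hrec := recursion hf ha m
      have hmk : m ≠ k := fun h => hbad 0 (by simpa using h.symm)
      have h2m : ∀ i, Col^[i] k ≠ 2 * m := by
        intro i h
        apply hbad (i + 1)
        rw [Function.iterate_succ_apply', h, Col]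
        have : (2 * m) % 2 = 0 := by omega
        rw [if_neg (by omega)]
        omega
      have hb2 := ih (2 * m) (by omega) h2m
      rw [if_neg hmk] at hrec
      by_cases h4 : m % 6 = 4
      · have hp : ∀ i, Col^[i] k ≠ (m - 1) / 3 := by
          intro i h
          apply hbad (i + 1)
          rw [Function.iterate_succ_apply', h, Col]
          rw [if_pos (by omega)]
          omega
        have hbp := ih ((m - 1) / 3) (by omega) hp
        rw [if_pos h4] at hrec
        calc ‖a m‖
            ≤ ‖(wb : ℂ) * a (2 * m)‖ +
              ‖(wf : ℂ) * a ((m - 1) / 3)‖ := by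
              rw [hrec, add_zero]
              exact norm_add_le _ _
          _ = |wb| * ‖a (2 * m)‖ + |wf| * ‖a ((m - 1) / 3)‖ := by
              simp only [norm_mul, Complex.norm_real, Real.norm_eq_abs]
          _ ≤ |wb| * ((|wb| + |wf|) ^ j * C) + |wf| * ((|wb| + |wf|) ^ j * C) := by
              gcongr
          _ = (|wb| + |wf|) ^ (j + 1) * C := by ring
      · rw [if_neg h4, add_zero, add_zero] at hrec
        have hC0 : 0 ≤ C := le_trans (norm_nonneg _) (hbound 0)
        calc ‖a m‖ = |wb| * ‖a (2 * m)‖ := by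
              rw [hrec, norm_mul, Complex.norm_real, Real.norm_eq_abs]
          _ ≤ |wb| * ((|wb| + |wf|) ^ j * C) := by gcongr
          _ ≤ (|wb| + |wf|) * ((|wb| + |wf|) ^ j * C) :=
              mul_le_mul_of_nonneg_right (by linarith [abs_nonneg wf]) (by positivity)
          _ = (|wb| + |wf|) ^ (j + 1) * C := by ring
  have hlim : Tendsto (fun j => (|wb| + |wf|) ^ j * C) atTop (𝓝 0) := by
    have := (tendsto_pow_atTop_nhds_zero_of_lt_one hw0 hw).mul_const C
    simpa using this
  have hle : ‖a n‖ ≤ 0 :=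
    ge_of_tendsto hlim (Filter.Eventually.of_forall (fun j => key j n hn hcon))
  exact hne (by simpa using le_antisymm hle (norm_nonneg _))
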